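/- Suppose X is a finite set, M ≥ 2, and the label shift assumption holds with q(x|y) = p(x|y), p(y) > 0 for all y, and the class-conditional distributions {q(·|y) : y = 1,...,M} are linearly independent as functions on X. Let w = (w(1),...,w(M)) be a vector of nonnegative reals such that ∑_m w(m) p(m|x) > 0 for all x with q(x) > 0, and suppose that for all y, p(y) = ∑_x q(x) p(y|x) / (∑_m w(m) p(m|x)). Then w(y) = q(y)/p(y) for every y. -/

import Mathlib

theorem cpm_identifiability (X : Type*) [Fintype X] (M : ℕ) (hM : 2 ≤ M)
    (pY qY : Fin M → ℝ) (k : Fin M → X → ℝ)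
    (hpY : ∀ y, 0 < pY y) (hqY0 : ∀ y, 0 ≤ qY y)
    (hpY1 : ∑ y, pY y = 1) (hqY1 : ∑ y, qY y = 1)
    (hk0 : ∀ y x, 0 ≤ k y x) (hk1 : ∀ y, ∑ x, k y x = 1)
    (hpX : ∀ x, 0 < ∑ m, pY m * k m x)
    (hindep : ∀ α : Fin M → ℝ, (∀ x, ∑ y, α y * k y x = 0) → ∀ y, α y = 0)
    (w : Fin M → ℝ) (hw0 : ∀ m, 0 ≤ w m)
    (hwpos : ∀ x, 0 < ∑ m, qY m * k m x →
      0 < ∑ m, w m * (pY m * k m x / (∑ m', pY m' * k m' x)))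
    (hmatch : ∀ y, pY y = ∑ x, (∑ m, qY m * k m x) *
        ((pY y * k y x / (∑ m, pY m * k m x)) /
          (∑ m, w m * (pY m * k m x / (∑ m', pY m' * k m' x))))) :
    ∀ y, w y = qY y / pY y := by
  classical
  set p : X → ℝ := fun x => ∑ m, pY m * k m x with hp
  set q : X → ℝ := fun x => ∑ m, qY m * k m x with hq
  set s : X → ℝ := fun x => ∑ m, w m * (pY m * k m x) with hs
  have hs0 : ∀ x, 0 ≤ s x := fun x => Finset.sum_nonneg fun m _ =>
    mul_nonneg (hw0 m) (mul_nonneg (hpY m).le (hk0 m x))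
  have hq0 : ∀ x, 0 ≤ q x := fun x => Finset.sum_nonneg fun m _ =>
    mul_nonneg (hqY0 m) (hk0 m x)
  have hpne : ∀ x, (p x) ≠ 0 := fun x => (hpX x).ne'
  have hsdiv : ∀ x, (∑ m, w m * (pY m * k m x / (∑ m', pY m' * k m' x))) = s x / p x := by
    intro x
    rw [hs, Finset.sum_div]
    exact Finset.sum_congr rfl fun m _ => (mul_div_assoc _ _ _).symm
  -- q x = 0 when s x = 0
  have hqz : ∀ x, s x = 0 → q x = 0 := by
    intro x hx
    by_contra h
    have hqpos : 0 < q x := lt_of_le_of_ne (hq0 x) (Ne.symm h)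
    have := hwpos x hqpos
    rw [hsdiv x, hx, zero_div] at this
    exact lt_irrefl 0 this
  -- simplify matching
  have hmatch' : ∀ y, pY y = pY y * ∑ x, (q x / s x) * k y x := by
    intro y
    conv_lhs => rw [hmatch y]
    rw [Finset.mul_sum]
    refine Finset.sum_congr rfl fun x _ => ?_
    rw [hsdiv x]
    have hdd : (pY y * k y x / p x) / (s x / p x) = pY y * k y x / s x := by
      rcases eq_or_ne (s x) 0 with h0 | h0
      · simp [h0]
      · have hps : p x * s x ≠ 0 := mul_ne_zero (hpne x) h0
        field_simp
        simp [hpne x]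
    rw [hdd]
    ring
  have hT : ∀ y, ∑ x, (q x / s x) * k y x = 1 := by
    intro y
    have h2 : pY y * (∑ x, (q x / s x) * k y x) = pY y * 1 := by
      rw [mul_one, ← hmatch' y]
    exact mul_left_cancel₀ (hpY y).ne' h2
  have hTz : ∀ y, ∑ x, (q x / s x - 1) * k y x = 0 := by
    intro y
    have : ∑ x, (q x / s x - 1) * k y x
        = (∑ x, (q x / s x) * k y x) - ∑ x, k y x := by
      rw [← Finset.sum_sub_distrib]
      exact Finset.sum_congr rfl fun x _ => by ring
    rw [this, hT y, hk1 y, sub_self]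
  set α : Fin M → ℝ := fun y => w y * pY y - qY y with hα
  have hαsum : ∀ x, ∑ y, α y * k y x = s x - q x := by
    intro x
    rw [hs, hq, ← Finset.sum_sub_distrib]
    exact Finset.sum_congr rfl fun m _ => by simp [hα]; ring
  -- the key quantity
  have hE : ∑ x, (q x / s x - 1) * (s x - q x) = 0 := by
    have h1 : ∀ x, (q x / s x - 1) * (s x - q x)
        = ∑ y, α y * ((q x / s x - 1) * k y x) := by
      intro x
      rw [← hαsum x, Finset.mul_sum]
      exact Finset.sum_congr rfl fun y _ => by ring
    calc ∑ x, (q x / s x - 1) * (s x - q x)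
        = ∑ x, ∑ y, α y * ((q x / s x - 1) * k y x) :=
          Finset.sum_congr rfl fun x _ => h1 x
      _ = ∑ y, ∑ x, α y * ((q x / s x - 1) * k y x) := Finset.sum_comm
      _ = ∑ y, α y * ∑ x, (q x / s x - 1) * k y x := by
          refine Finset.sum_congr rfl fun y _ => ?_
          rw [Finset.mul_sum]
      _ = 0 := by simp [hTz]
  have hterm : ∀ x, (q x / s x - 1) * (s x - q x) ≤ 0 := by
    intro x
    rcases eq_or_ne (s x) 0 with h0 | h0
    · simp [h0, hqz x h0]
    · have hspos : 0 < s x := lt_of_le_of_ne (hs0 x) (Ne.symm h0)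
      have heq : (q x / s x - 1) * (s x - q x) = -((s x - q x)^2 / s x) := by
        field_simp
        ring
      rw [heq]
      exact neg_nonpos.mpr (div_nonneg (sq_nonneg _) hspos.le)
  have hzero : ∀ x ∈ Finset.univ, (q x / s x - 1) * (s x - q x) = 0 := by
    intro x hx
    have := (Finset.sum_eq_zero_iff_of_nonpos (fun x _ => hterm x)).mp hE
    exact this x hx
  have hsq : ∀ x, s x = q x := by
    intro x
    rcases eq_or_ne (s x) 0 with h0 | h0
    · rw [h0, hqz x h0]
    · have hspos : 0 < s x := lt_of_le_of_ne (hs0 x) (Ne.symm h0)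
      have heq : (q x / s x - 1) * (s x - q x) = -((s x - q x)^2 / s x) := by
        field_simp
        ring
      have h2 := hzero x (Finset.mem_univ x)
      rw [heq] at h2
      have := neg_eq_zero.mp h2
      field_simp at this
      nlinarith [sq_nonneg (s x - q x)]
  have hαz : ∀ y, α y = 0 := by
    apply hindep
    intro x
    rw [hαsum x, hsq x, sub_self]
  intro y
  have := hαz y
  rw [hα] at this
  simp only at this
  have hpy := (hpY y).ne'
  field_simp
  linarith
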